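/- Let $\pi_1$ be a linear Poisson bivector and $\pi=[X,\pi_1]$ for a quadratic vector field $X$, with $\pi_1(q)$ the hamiltonian vector field of a quadratic $q$ such that $[\pi,\pi_1(q)]=0$. Suppose further there is a cubic polynomial $m$ with $[X,\pi_1(q)]=\pi_1(m)$ (identity on $\mathfrak{s}^*$). If $r_k$ is a Casimir function of $\pi_1$ (i.e., $\pi_1(r_k)=0$), then $r_{k-1}:=X r_k$ satisfies $\pi(r_k)+\pi_1(r_{k-1})=0$ and $\pi_1(q)\,r_{k-1}=0$. -/
import Mathlib


/-- Let `π₁` be a linear Poisson bivector and `π = [X,π₁]` for a quadratic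
vector field `X`, with `π₁(q)` the hamiltonian vector field of a quadratic `q` such that
`[π,π₁(q)] = 0`.  Suppose further there is a cubic polynomial `m` with `[X,π₁(q)] = π₁(m)`.
If `r_k` is a Casimir function of `π₁` (`π₁(r_k) = 0`), then `r_{k-1} := X r_k` satisfies
`π(r_k) + π₁(r_{k-1}) = 0` and `π₁(q) r_{k-1} = 0`.

Abstract model: `F` functions, `V1` vector fields, `V2` bivectors; `ham P f = [P,f]` the
hamiltonian vector field; `act Y f = Yf`; `lieV2 Y P = [Y,P]`; `lieVV Y Z = [Y,Z]`; the
derivation property of `[Y,·]`, the skew-symmetry of the Poisson brackets and the action of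
a commutator of vector fields are supplied as hypotheses. -/
theorem casimir_descent_step
    (F V1 V2 : Type*)
    [AddCommGroup F] [Module ℝ F] [AddCommGroup V1] [Module ℝ V1]
    [AddCommGroup V2] [Module ℝ V2]
    (ham : V2 →ₗ[ℝ] F →ₗ[ℝ] V1)
    (act : V1 →ₗ[ℝ] F →ₗ[ℝ] F)
    (lieV2 : V1 →ₗ[ℝ] V2 →ₗ[ℝ] V2)
    (lieVV : V1 →ₗ[ℝ] V1 →ₗ[ℝ] V1)
    (hder : ∀ (Y : V1) (P : V2) (f : F),
      lieVV Y (ham P f) = ham (lieV2 Y P) f + ham P (act Y f))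
    (hskew : ∀ (P : V2) (f g : F), act (ham P f) g = -act (ham P g) f)
    (hact : ∀ (Y Z : V1) (f : F),
      act (lieVV Y Z) f = act Y (act Z f) - act Z (act Y f))
    (π₁ π : V2) (X : V1) (q m rk : F)
    (hπ : π = lieV2 X π₁)
    (hcompat : lieV2 (ham π₁ q) π = 0)
    (hm : lieVV X (ham π₁ q) = ham π₁ m)
    (hrk : ham π₁ rk = 0) :
    ham π rk + ham π₁ (act X rk) = 0 ∧ act (ham π₁ q) (act X rk) = 0 := by
  constructor
  · have h := hder X π₁ rk
    rw [hrk, hπ] at *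
    simpa using h.symm
  · have h := hact X (ham π₁ q) rk
    rw [hm, hskew π₁ m rk, hrk, hskew π₁ q rk, hrk] at h
    simpa using h.symm
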